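/- Let n ≥ 1, ε > 0, let U ⊆ ℝⁿ be open, let H : ℝⁿ → ℝ be continuously differentiable, and let u : U → ℝ be three times continuously differentiable and satisfy H(∇u(x)) = ε Δu(x) for every x ∈ U. For real numbers α, β define z(x) := α (x · ∇u(x)) + β u(x). Then at every x ∈ U one has ∇H(∇u(x)) · ∇z(x) − ε Δz(x) = (α + β) ∇H(∇u(x)) · ∇u(x) − (2α + β) ε Δu(x). -/

import Mathlib

open scoped RealInnerProductSpace Topology

/-- The second partial derivative ∂²u/∂xᵢ∂xₖ of `u` at `x`. -/
noncomputable def pd2 {n : ℕ} (u : EuclideanSpace ℝ (Fin n) → ℝ)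
    (x : EuclideanSpace ℝ (Fin n)) (i k : Fin n) : ℝ :=
  fderiv ℝ (fun y => fderiv ℝ u y (EuclideanSpace.single k 1)) x (EuclideanSpace.single i 1)

/-- The Laplacian of `u` at `x`: the sum of the second partial derivatives ∂²u/∂xᵢ². -/
noncomputable def lap {n : ℕ} (u : EuclideanSpace ℝ (Fin n) → ℝ)
    (x : EuclideanSpace ℝ (Fin n)) : ℝ :=
  ∑ i, pd2 u x i i


variable {n : ℕ}
local notation "E" => EuclideanSpace ℝ (Fin n)

noncomputable abbrev ee (i : Fin n) : EuclideanSpace ℝ (Fin n) := EuclideanSpace.single i 1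

lemma grad_apply (f : EuclideanSpace ℝ (Fin n) → ℝ) (x : EuclideanSpace ℝ (Fin n)) (i : Fin n) :
    gradient f x i = fderiv ℝ f x (ee i) := by
  have h1 : gradient f x i = ⟪gradient f x, ee i⟫ := by
    rw [ee, EuclideanSpace.inner_single_right]; simp
  rw [h1, gradient, InnerProductSpace.toDual_symm_apply]

lemma fderiv_eq_inner_grad (f : EuclideanSpace ℝ (Fin n) → ℝ) (x w : EuclideanSpace ℝ (Fin n)) :
    fderiv ℝ f x w = ⟪gradient f x, w⟫ := by
  rw [gradient, InnerProductSpace.toDual_symm_apply]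

lemma inner_expand (a b : EuclideanSpace ℝ (Fin n)) : ⟪a, b⟫ = ∑ i, a i * b i := by
  simp [PiLp.inner_apply, mul_comm]

lemma fderiv_apply_const {f : EuclideanSpace ℝ (Fin n) → (EuclideanSpace ℝ (Fin n) →L[ℝ] ℝ)}
    {x : EuclideanSpace ℝ (Fin n)} (hf : DifferentiableAt ℝ f x) (v w : EuclideanSpace ℝ (Fin n)) :
    fderiv ℝ (fun y => f y w) x v = fderiv ℝ f x v w := by
  have := ((ContinuousLinearMap.apply ℝ ℝ w).hasFDerivAt.comp x hf.hasFDerivAt).fderiv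
  rw [show (fun y => f y w) = (⇑(ContinuousLinearMap.apply ℝ ℝ w) ∘ f) from rfl, this]; rfl

lemma symm2 {f : EuclideanSpace ℝ (Fin n) → ℝ} {x : EuclideanSpace ℝ (Fin n)}
    (hf : ContDiffAt ℝ 2 f x) (v w : EuclideanSpace ℝ (Fin n)) :
    fderiv ℝ (fun y => fderiv ℝ f y w) x v = fderiv ℝ (fun y => fderiv ℝ f y v) x w := by
  have hd : DifferentiableAt ℝ (fderiv ℝ f) x :=
    (hf.fderiv_right (m := 1) le_rfl).differentiableAt one_ne_zero
  rw [fderiv_apply_const hd, fderiv_apply_const hd]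
  exact (hf.isSymmSndFDerivAt (by simp)) v w

noncomputable def Pf (u : EuclideanSpace ℝ (Fin n) → ℝ) (k : Fin n) :
    EuclideanSpace ℝ (Fin n) → ℝ := fun y => fderiv ℝ u y (ee k)

noncomputable def Qf (u : EuclideanSpace ℝ (Fin n) → ℝ) (i k : Fin n) :
    EuclideanSpace ℝ (Fin n) → ℝ := fun y => fderiv ℝ (Pf u k) y (ee i)

lemma pd2_eq' (u : EuclideanSpace ℝ (Fin n) → ℝ) (x : EuclideanSpace ℝ (Fin n)) (i k : Fin n) :
    pd2 u x i k = Qf u i k x := rfl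

lemma lap_eq' (u : EuclideanSpace ℝ (Fin n) → ℝ) (x : EuclideanSpace ℝ (Fin n)) :
    lap u x = ∑ k, Qf u k k x := rfl

lemma contDiffAt_Pf {u : EuclideanSpace ℝ (Fin n) → ℝ} {x : EuclideanSpace ℝ (Fin n)}
    (h : ContDiffAt ℝ 3 u x) (k : Fin n) : ContDiffAt ℝ 2 (Pf u k) x := by
  have h1 : ContDiffAt ℝ 2 (fderiv ℝ u) x := h.fderiv_right (by norm_num)
  exact h1.clm_apply contDiffAt_const

lemma contDiffAt_Qf {u : EuclideanSpace ℝ (Fin n) → ℝ} {x : EuclideanSpace ℝ (Fin n)}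
    (h : ContDiffAt ℝ 3 u x) (i k : Fin n) : ContDiffAt ℝ 1 (Qf u i k) x := by
  have h1 : ContDiffAt ℝ 1 (fderiv ℝ (Pf u k)) x :=
    (contDiffAt_Pf h k).fderiv_right (by norm_num)
  exact h1.clm_apply contDiffAt_const

lemma Qf_symm {u : EuclideanSpace ℝ (Fin n) → ℝ} {x : EuclideanSpace ℝ (Fin n)}
    (h : ContDiffAt ℝ 2 u x) (i k : Fin n) : Qf u i k x = Qf u k i x :=
  symm2 h (ee i) (ee k)

lemma fderiv_Z {u : EuclideanSpace ℝ (Fin n) → ℝ} {y : EuclideanSpace ℝ (Fin n)}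
    (h : ContDiffAt ℝ 3 u y) (α β : ℝ) (k : Fin n) :
    fderiv ℝ (fun w => α * ∑ i, w i * Pf u i w + β * u w) y (ee k)
      = (α + β) * Pf u k y + α * ∑ i, y i * Qf u k i y := by
  have hPd : ∀ i : Fin n, HasFDerivAt (Pf u i) (fderiv ℝ (Pf u i) y) y := fun i =>
    (((contDiffAt_Pf h i).differentiableAt (by norm_num))).hasFDerivAt
  have hmul : ∀ i : Fin n, HasFDerivAt (fun w : EuclideanSpace ℝ (Fin n) => w i * Pf u i w)
      ((y i) • fderiv ℝ (Pf u i) y + (Pf u i y) • (EuclideanSpace.proj i :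
        EuclideanSpace ℝ (Fin n) →L[ℝ] ℝ)) y := fun i =>
    (EuclideanSpace.proj i).hasFDerivAt.mul (hPd i)
  have hsum := HasFDerivAt.fun_sum (fun i (_ : i ∈ Finset.univ) => hmul i)
  have huD : HasFDerivAt u (fderiv ℝ u y) y :=
    (h.differentiableAt (by norm_num)).hasFDerivAt
  have htot := (hsum.const_mul α).fun_add (huD.const_mul β)
  rw [htot.fderiv]
  have h2 : ∀ i : Fin n, fderiv ℝ (Pf u i) y (ee k) = Qf u k i y := fun i => rfl
  have h3 : fderiv ℝ u y (ee k) = Pf u k y := rfl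
  simp only [ContinuousLinearMap.add_apply, ContinuousLinearMap.coe_smul',
    ContinuousLinearMap.coe_sum', Finset.sum_apply, Pi.smul_apply,
    PiLp.proj_apply, smul_eq_mul, h2, h3, ee, EuclideanSpace.single_apply,
    mul_ite, mul_one, mul_zero, Finset.sum_add_distrib, Finset.sum_ite_eq',
    Finset.mem_univ, if_true]
  ring

lemma fderiv_phi {u : EuclideanSpace ℝ (Fin n) → ℝ} {x : EuclideanSpace ℝ (Fin n)}
    (h : ContDiffAt ℝ 3 u x) (α β : ℝ) (k : Fin n) :
    fderiv ℝ (fun w => (α + β) * Pf u k w + α * ∑ i, w i * Qf u k i w) x (ee k)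
      = (α + β) * Qf u k k x
        + α * (Qf u k k x + ∑ i, x i * fderiv ℝ (Qf u k i) x (ee k)) := by
  have hPd : HasFDerivAt (Pf u k) (fderiv ℝ (Pf u k) x) x :=
    ((contDiffAt_Pf h k).differentiableAt (by norm_num)).hasFDerivAt
  have hQd : ∀ i : Fin n, HasFDerivAt (Qf u k i) (fderiv ℝ (Qf u k i) x) x := fun i =>
    ((contDiffAt_Qf h k i).differentiableAt one_ne_zero).hasFDerivAt
  have hmul : ∀ i : Fin n, HasFDerivAt (fun w : EuclideanSpace ℝ (Fin n) => w i * Qf u k i w)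
      ((x i) • fderiv ℝ (Qf u k i) x + (Qf u k i x) • (EuclideanSpace.proj i :
        EuclideanSpace ℝ (Fin n) →L[ℝ] ℝ)) x := fun i =>
    (EuclideanSpace.proj i).hasFDerivAt.mul (hQd i)
  have hsum := HasFDerivAt.fun_sum (fun i (_ : i ∈ Finset.univ) => hmul i)
  have htot := (hPd.const_mul (α + β)).fun_add (hsum.const_mul α)
  rw [htot.fderiv]
  have h2 : fderiv ℝ (Pf u k) x (ee k) = Qf u k k x := rfl
  simp only [ContinuousLinearMap.add_apply, ContinuousLinearMap.coe_smul',
    ContinuousLinearMap.coe_sum', Finset.sum_apply, Pi.smul_apply,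
    PiLp.proj_apply, smul_eq_mul, h2, ee, EuclideanSpace.single_apply,
    mul_ite, mul_one, mul_zero, Finset.sum_add_distrib, Finset.sum_ite_eq',
    Finset.mem_univ, if_true]
  ring
lemma alg {m : ℕ} (Hk P : Fin m → ℝ) (Q S : Fin m → Fin m → ℝ) (xv : Fin m → ℝ) (α β ε : ℝ)
    (hstar : ∀ i, ∑ k, Hk k * Q i k = ε * ∑ k, S i k) :
    ∑ k, Hk k * ((α + β) * P k + α * ∑ i, xv i * Q i k)
      - ε * ∑ k, ((α + β) * Q k k + α * (Q k k + ∑ i, xv i * S i k))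
    = (α + β) * ∑ k, Hk k * P k - (2 * α + β) * (ε * ∑ k, Q k k) := by
  have key : ∑ k, ∑ i, Hk k * (xv i * Q i k) = ε * ∑ k, ∑ i, xv i * S i k := by
    calc ∑ k, ∑ i, Hk k * (xv i * Q i k) = ∑ i, ∑ k, Hk k * (xv i * Q i k) :=
          Finset.sum_comm
      _ = ∑ i, xv i * (ε * ∑ k, S i k) := by
          refine Finset.sum_congr rfl fun i _ => ?_
          rw [← hstar i, Finset.mul_sum]
          exact Finset.sum_congr rfl fun k _ => by ring
      _ = ∑ i, ∑ k, ε * (xv i * S i k) := by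
          refine Finset.sum_congr rfl fun i _ => ?_
          rw [Finset.mul_sum, Finset.mul_sum]
          exact Finset.sum_congr rfl fun k _ => by ring
      _ = ∑ k, ∑ i, ε * (xv i * S i k) := Finset.sum_comm
      _ = ε * ∑ k, ∑ i, xv i * S i k := by
          rw [Finset.mul_sum]
          exact Finset.sum_congr rfl fun k _ => by rw [Finset.mul_sum]
  have e1 : ∑ k, Hk k * ((α + β) * P k + α * ∑ i, xv i * Q i k)
      = (α + β) * ∑ k, Hk k * P k + α * ∑ k, ∑ i, Hk k * (xv i * Q i k) := by
    rw [Finset.mul_sum, Finset.mul_sum, ← Finset.sum_add_distrib]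
    refine Finset.sum_congr rfl fun k _ => ?_
    have : (∑ i, Hk k * (xv i * Q i k)) = Hk k * ∑ i, xv i * Q i k :=
      (Finset.mul_sum _ _ _).symm
    rw [this]; ring
  have e2 : ∑ k, ((α + β) * Q k k + α * (Q k k + ∑ i, xv i * S i k))
      = (2 * α + β) * ∑ k, Q k k + α * ∑ k, ∑ i, xv i * S i k := by
    rw [Finset.mul_sum, Finset.mul_sum, ← Finset.sum_add_distrib]
    refine Finset.sum_congr rfl fun k _ => ?_
    ring
  rw [e1, e2, key]
  ring


theorem stmt9 (n : ℕ) (hn : 1 ≤ n) (ε : ℝ) (hε : 0 < ε)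
    (U : Set (EuclideanSpace ℝ (Fin n))) (hUopen : IsOpen U)
    (H : EuclideanSpace ℝ (Fin n) → ℝ) (hH : ContDiff ℝ 1 H)
    (u : EuclideanSpace ℝ (Fin n) → ℝ) (hu : ContDiffOn ℝ 3 u U)
    (heq : ∀ x ∈ U, H (gradient u x) = ε * lap u x)
    (α β : ℝ)
    (z : EuclideanSpace ℝ (Fin n) → ℝ)
    (hz : ∀ x, z x = α * ⟪x, gradient u x⟫ + β * u x) :
    ∀ x ∈ U,
      ⟪gradient H (gradient u x), gradient z x⟫ - ε * lap z x
      = (α + β) * ⟪gradient H (gradient u x), gradient u x⟫ - (2 * α + β) * (ε * lap u x) := by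
  have hzZ : z = fun w => α * ∑ i, w i * Pf u i w + β * u w := by
    funext w
    have h0 : ⟪w, gradient u w⟫ = ∑ i, w i * Pf u i w := by
      rw [inner_expand]
      exact Finset.sum_congr rfl fun i _ => by rw [grad_apply]; rfl
    rw [hz w, h0]
  subst hzZ
  intro x hx
  have hU : U ∈ 𝓝 x := hUopen.mem_nhds hx
  have hu3 : ∀ y ∈ U, ContDiffAt ℝ 3 u y := fun y hy =>
    (hu y hy).contDiffAt (hUopen.mem_nhds hy)
  have hux : ContDiffAt ℝ 3 u x := hu3 x hx
  set Hk : Fin n → ℝ := fun k => gradient H (gradient u x) k with hHk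
  -- gradient of z
  have hgz : ∀ k, gradient (fun w => α * ∑ i, w i * Pf u i w + β * u w) x k
      = (α + β) * Pf u k x + α * ∑ i, x i * Qf u i k x := by
    intro k
    rw [grad_apply, fderiv_Z hux]
    congr 1
    exact congrArg _ (Finset.sum_congr rfl fun i _ => by
      rw [Qf_symm (hux.of_le (by norm_num)) k i])
  have hinner1 : ⟪gradient H (gradient u x),
      gradient (fun w => α * ∑ i, w i * Pf u i w + β * u w) x⟫
      = ∑ k, Hk k * ((α + β) * Pf u k x + α * ∑ i, x i * Qf u i k x) := by
    rw [inner_expand]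
    exact Finset.sum_congr rfl fun k _ => by rw [hgz k]
  have hT : ∀ i k : Fin n, fderiv ℝ (Qf u k i) x (ee k) = fderiv ℝ (Qf u k k) x (ee i) := by
    intro i k
    have hev : Qf u k i =ᶠ[𝓝 x] (fun y => fderiv ℝ (Pf u k) y (ee i)) :=
      Filter.eventuallyEq_of_mem hU
        (fun y hy => symm2 ((hu3 y hy).of_le (by norm_num)) (ee k) (ee i))
    rw [hev.fderiv_eq]
    exact symm2 (contDiffAt_Pf hux k) (ee k) (ee i)
  have hlapZ : lap (fun w => α * ∑ i, w i * Pf u i w + β * u w) x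
      = ∑ k, ((α + β) * Qf u k k x
          + α * (Qf u k k x + ∑ i, x i * fderiv ℝ (Qf u k k) x (ee i))) := by
    rw [lap_eq']
    refine Finset.sum_congr rfl fun k _ => ?_
    have hev : Pf (fun w => α * ∑ i, w i * Pf u i w + β * u w) k =ᶠ[𝓝 x]
        (fun w => (α + β) * Pf u k w + α * ∑ i, w i * Qf u k i w) :=
      Filter.eventuallyEq_of_mem hU (fun y hy => fderiv_Z (hu3 y hy) α β k)
    have : Qf (fun w => α * ∑ i, w i * Pf u i w + β * u w) k k x
        = fderiv ℝ (fun w => (α + β) * Pf u k w + α * ∑ i, w i * Qf u k i w) x (ee k) := by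
      show fderiv ℝ (Pf (fun w => α * ∑ i, w i * Pf u i w + β * u w) k) x (ee k) = _
      rw [hev.fderiv_eq]
    rw [this, fderiv_phi hux]
    have hs : ∑ i, x i * fderiv ℝ (Qf u k i) x (ee k)
        = ∑ i, x i * fderiv ℝ (Qf u k k) x (ee i) :=
      Finset.sum_congr rfl fun i _ => by rw [hT i k]
    rw [hs]
  have hstar : ∀ i : Fin n, ∑ k, Hk k * Qf u i k x
      = ε * ∑ k, fderiv ℝ (Qf u k k) x (ee i) := by
    intro i
    have hev : (fun y => H (gradient u y)) =ᶠ[𝓝 x] (fun y => ε * ∑ k, Qf u k k y) :=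
      Filter.eventuallyEq_of_mem hU (fun y hy => by
        show H (gradient u y) = ε * ∑ k, Qf u k k y
        rw [heq y hy, lap_eq'])
    have hfe := Filter.EventuallyEq.fderiv_eq (𝕜 := ℝ) hev
    -- derivative of the right side
    have hQd : ∀ k : Fin n, HasFDerivAt (Qf u k k) (fderiv ℝ (Qf u k k) x) x := fun k =>
      ((contDiffAt_Qf hux k k).differentiableAt one_ne_zero).hasFDerivAt
    have hR := (HasFDerivAt.fun_sum (fun k (_ : k ∈ Finset.univ) => hQd k)).const_mul ε
    -- derivative of the left side
    have hGs : (gradient u) = fun y => ∑ k, Pf u k y • ee k := by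
      funext y
      ext j
      rw [grad_apply u y j]
      have h := map_sum (EuclideanSpace.proj j : EuclideanSpace ℝ (Fin n) →L[ℝ] ℝ)
        (fun k => Pf u k y • ee k) Finset.univ
      simp only [PiLp.proj_apply] at h
      rw [h]
      simp [ee, EuclideanSpace.single_apply, Pf]
    have hPdx : ∀ k : Fin n, HasFDerivAt (Pf u k) (fderiv ℝ (Pf u k) x) x := fun k =>
      ((contDiffAt_Pf hux k).differentiableAt (by norm_num)).hasFDerivAt
    have hG : HasFDerivAt (gradient u)
        (∑ k, (fderiv ℝ (Pf u k) x).smulRight (ee k)) x := by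
      have h := HasFDerivAt.fun_sum
        (fun k (_ : k ∈ Finset.univ) => (hPdx k).smul_const (ee k))
      rw [hGs]
      exact h
    have hH' : HasFDerivAt H (fderiv ℝ H (gradient u x)) (gradient u x) :=
      ((hH.differentiable one_ne_zero) (gradient u x)).hasFDerivAt
    have hcomp := hH'.comp x hG
    have h1 : fderiv ℝ (fun y => H (gradient u y)) x (ee i)
        = ∑ k, Qf u i k x * fderiv ℝ H (gradient u x) (ee k) := by
      rw [show (fun y => H (gradient u y)) = H ∘ gradient u from rfl, hcomp.fderiv]
      simp only [ContinuousLinearMap.coe_comp', Function.comp_apply,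
        ContinuousLinearMap.coe_sum', Finset.sum_apply,
        ContinuousLinearMap.smulRight_apply, map_sum, map_smul, smul_eq_mul]
      rfl
    have h3 : ∑ k, Qf u i k x * fderiv ℝ H (gradient u x) (ee k)
        = ∑ k, Hk k * Qf u i k x := by
      refine Finset.sum_congr rfl fun k _ => ?_
      rw [fderiv_eq_inner_grad]
      rw [ee, EuclideanSpace.inner_single_right, conj_trivial, one_mul]
      exact mul_comm _ _
    have h4 : fderiv ℝ (fun y => ε * ∑ k, Qf u k k y) x (ee i)
        = ε * ∑ k, fderiv ℝ (Qf u k k) x (ee i) := by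
      rw [hR.fderiv]
      simp [Finset.mul_sum]
    rw [← h3, ← h1, hfe, h4]
  -- final assembly
  rw [hinner1, hlapZ]
  have hiu : ⟪gradient H (gradient u x), gradient u x⟫ = ∑ k, Hk k * Pf u k x := by
    rw [inner_expand]
    exact Finset.sum_congr rfl fun k _ => by rw [grad_apply u x k]; rfl
  rw [hiu, lap_eq']
  exact alg Hk (fun k => Pf u k x) (fun i k => Qf u i k x)
    (fun i k => fderiv ℝ (Qf u k k) x (ee i)) (fun i => x i) α β ε hstar
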